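/- If G is a hyperforest (a hypergraph with no proper cycles), its hyperedges U_1,...,U_m can be ordered so that |(U_1 ∪ ⋯ ∪ U_i) ∩ U_{i+1}| ≤ 1 for each i. -/

import Mathlib

/-- A hypergraph `G` (each hyperedge of size at least 2) contains a proper
cycle: a sequence of vertices `v_0, v_1, …, v_ℓ` with `v_0 = v_ℓ`, `ℓ ≥ 1`,
pairwise distinct hyperedges `U_1, …, U_ℓ` with `v_{i-1} ≠ v_i` and
`{v_{i-1}, v_i} ⊆ U_i` for each `i`. -/
def HasProperCycle {V : Type*} [DecidableEq V] (G : Finset (Finset V)) : Prop :=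
  ∃ (ℓ : ℕ), 1 ≤ ℓ ∧ ∃ (v : Fin (ℓ + 1) → V) (U : Fin ℓ → Finset V),
    Function.Injective U ∧ (∀ i, U i ∈ G) ∧
    (∀ i : Fin ℓ, v i.castSucc ≠ v i.succ ∧
      v i.castSucc ∈ U i ∧ v i.succ ∈ U i) ∧
    v 0 = v (Fin.last ℓ)

lemma cycle_of_walk {V : Type*} [DecidableEq V] (G : Finset (Finset V)) (n : ℕ) (hn : 1 ≤ n)
    (w : ℕ → V) (E : ℕ → Finset V)
    (hEG : ∀ i < n, E i ∈ G)
    (hEinj : ∀ i j, i < j → j < n → E i ≠ E j)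
    (hstep : ∀ i < n, w i ≠ w (i + 1) ∧ w i ∈ E i ∧ w (i + 1) ∈ E i)
    (hclose : w 0 = w n) : HasProperCycle G := by
  refine ⟨n, hn, fun i => w i.val, fun i => E i.val, ?_, fun i => hEG i i.isLt, ?_, ?_⟩
  · intro i j h
    rcases lt_trichotomy i.val j.val with h' | h' | h'
    · exact absurd h (hEinj _ _ h' j.isLt)
    · exact Fin.ext h'
    · exact absurd h.symm (hEinj _ _ h' i.isLt)
  · intro i
    have := hstep i i.isLt
    simpa using this
  · simpa using hclose

lemma exists_leaf {V : Type*} [DecidableEq V] (G : Finset (Finset V))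
    (hne : G.Nonempty) (hforest : ¬ HasProperCycle G) :
    ∃ U ∈ G, (((G.erase U).biUnion id) ∩ U).card ≤ 1 := by
  by_contra hcon
  push_neg at hcon
  have key : ∀ k, 1 ≤ k → ∃ (U : ℕ → Finset V) (a : ℕ → V),
      (∀ i < k, U i ∈ G) ∧ (∀ i j, i < j → j < k → U i ≠ U j) ∧
      (∀ i, i + 1 < k → a i ∈ U i ∧ a i ∈ U (i + 1)) ∧
      (∀ i, i + 2 < k → a i ≠ a (i + 1)) := by
    intro k
    induction k with
    | zero => omega
    | succ k IH =>
      intro _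
      rcases Nat.eq_zero_or_pos k with rfl | hk1
      · obtain ⟨U0, hU0⟩ := hne
        have h2 := hcon U0 hU0
        obtain ⟨x, hx, -⟩ := Finset.one_lt_card.mp h2
        exact ⟨fun _ => U0, fun _ => x, fun i _ => hU0, fun i j h1 h2 => by omega,
          fun i h => by omega, fun i h => by omega⟩
      obtain ⟨m, rfl⟩ : ∃ m, k = m + 1 := ⟨k - 1, by omega⟩
      obtain ⟨U, a, hG, hinj, hmem, hne'⟩ := IH (by omega)
      have hUm : U m ∈ G := hG m (by omega)
      have h2 := hcon (U m) hUm
      obtain ⟨x, hx, y, hy, hxy⟩ := Finset.one_lt_card.mp h2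
      set b : V := if 1 ≤ m ∧ x = a (m - 1) then y else x with hb
      have hbS : b ∈ ((G.erase (U m)).biUnion id) ∩ U m := by
        rw [hb]; split <;> assumption
      have hbne : 1 ≤ m → b ≠ a (m - 1) := by
        intro hm
        rw [hb]; split
        · rename_i h; intro he; exact hxy (by rw [he, h.2])
        · rename_i h; exact fun he => h ⟨hm, he⟩
      obtain ⟨hbB, hbU⟩ := Finset.mem_inter.mp hbS
      obtain ⟨W, hWe, hbW⟩ := Finset.mem_biUnion.mp hbB
      have hWG : W ∈ G := Finset.mem_of_mem_erase hWe
      have hWne : W ≠ U m := Finset.ne_of_mem_erase hWe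
      simp only [id] at hbW
      have ham : 1 ≤ m → a (m - 1) ∈ U (m - 1) ∧ a (m - 1) ∈ U m := by
        intro hm
        have := hmem (m - 1) (by omega)
        rwa [show m - 1 + 1 = m by omega] at this
      by_cases hcol : ∃ j, j < m + 1 ∧ U j = W
      · exfalso
        obtain ⟨j, hjm, hUjW⟩ := hcol
        have hjm' : j < m := by
          rcases Nat.lt_succ_iff_lt_or_eq.mp hjm with h | h
          · exact h
          · exact absurd (h ▸ hUjW).symm hWne
        have hm1 : 1 ≤ m := by omega
        by_cases hba : b = a j
        · refine hforest (cycle_of_walk G (m - j) (by omega)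
            (fun i => if i = m - j then b else a (j + i))
            (fun i => U (j + 1 + i)) ?_ ?_ ?_ ?_)
          · intro i hi; exact hG _ (by omega)
          · intro i i' h1 h2
            exact hinj (j + 1 + i) (j + 1 + i') (by omega) (by omega)
          · intro i hi
            rw [if_neg (show ¬ i = m - j by omega)]
            rcases Nat.lt_or_ge (i + 1) (m - j) with h | h
            · rw [if_neg (show ¬ i + 1 = m - j by omega),
                show j + (i + 1) = (j + i) + 1 by omega,
                show j + 1 + i = (j + i) + 1 by omega]
              exact ⟨hne' (j + i) (by omega), (hmem (j + i) (by omega)).2,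
                (hmem ((j + i) + 1) (by omega)).1⟩
            · rw [if_pos (show i + 1 = m - j by omega),
                show j + i = m - 1 by omega, show j + 1 + i = m by omega]
              exact ⟨fun he => hbne hm1 he.symm, (ham hm1).2, hbU⟩
          · rw [if_neg (show ¬ (0:ℕ) = m - j by omega),
              if_pos (rfl : m - j = m - j), show j + 0 = j by omega]
            exact hba.symm
        · refine hforest (cycle_of_walk G (m + 1 - j) (by omega)
            (fun i => if i = 0 ∨ i = m + 1 - j then b else a (j + i - 1))
            (fun i => U (j + i)) ?_ ?_ ?_ ?_)
          · intro i hi; exact hG _ (by omega)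
          · intro i i' h1 h2
            exact hinj (j + i) (j + i') (by omega) (by omega)
          · intro i hi
            rcases Nat.eq_zero_or_pos i with rfl | hi0
            · rw [if_pos (Or.inl rfl),
                if_neg (show ¬ ((0:ℕ) + 1 = 0 ∨ 0 + 1 = m + 1 - j) by omega),
                show j + (0 + 1) - 1 = j by omega, show j + 0 = j by omega]
              refine ⟨hba, ?_, (hmem j (by omega)).1⟩
              rw [← hUjW] at hbW; exact hbW
            · rw [if_neg (show ¬ (i = 0 ∨ i = m + 1 - j) by omega)]
              rcases Nat.lt_or_ge (i + 1) (m + 1 - j) with h | h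
              · rw [if_neg (show ¬ (i + 1 = 0 ∨ i + 1 = m + 1 - j) by omega),
                  show j + (i + 1) - 1 = (j + i - 1) + 1 by omega,
                  show j + i = (j + i - 1) + 1 by omega]
                exact ⟨hne' (j + i - 1) (by omega), (hmem (j + i - 1) (by omega)).2,
                  (hmem ((j + i - 1) + 1) (by omega)).1⟩
              · rw [if_pos (Or.inr (show i + 1 = m + 1 - j by omega)),
                  show j + i - 1 = m - 1 by omega, show j + i = m by omega]
                exact ⟨fun he => hbne hm1 he.symm, (ham hm1).2, hbU⟩
          · rw [if_pos (Or.inl rfl), if_pos (Or.inr (rfl : m + 1 - j = m + 1 - j))]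
      · push_neg at hcol
        refine ⟨fun i => if i = m + 1 then W else U i, fun i => if i = m then b else a i,
          ?_, ?_, ?_, ?_⟩
        · intro i hi
          dsimp only
          rcases Nat.lt_or_ge i (m + 1) with h | h
          · rw [if_neg (by omega)]; exact hG i h
          · rw [if_pos (by omega)]; exact hWG
        · intro i j h1 h2
          dsimp only
          rcases Nat.lt_or_ge j (m + 1) with h | h
          · rw [if_neg (show ¬ i = m + 1 by omega), if_neg (show ¬ j = m + 1 by omega)]
            exact hinj i j h1 h
          · rw [if_neg (show ¬ i = m + 1 by omega), if_pos (show j = m + 1 by omega)]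
            exact hcol i (by omega)
        · intro i hi
          dsimp only
          rcases Nat.lt_or_ge i m with h | h
          · rw [if_neg (show ¬ i = m by omega), if_neg (show ¬ i = m + 1 by omega),
              if_neg (show ¬ i + 1 = m + 1 by omega)]
            exact hmem i (by omega)
          · have hieq : i = m := by omega
            subst hieq
            rw [if_pos rfl, if_neg (show ¬ i = i + 1 by omega), if_pos rfl]
            exact ⟨hbU, hbW⟩
        · intro i hi
          dsimp only
          rcases Nat.lt_or_ge (i + 1) m with h | h
          · rw [if_neg (show ¬ i = m by omega), if_neg (show ¬ i + 1 = m by omega)]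
            exact hne' i (by omega)
          · have hm1 : 1 ≤ m := by omega
            rw [if_neg (show ¬ i = m by omega), if_pos (show i + 1 = m by omega)]
            intro he
            have : i = m - 1 := by omega
            rw [this] at he
            exact hbne hm1 he.symm
  obtain ⟨U, a, hG, hinj, -, -⟩ := key (G.card + 1) (by omega)
  have hsub : (Finset.range (G.card + 1)).image U ⊆ G := by
    intro x hx
    obtain ⟨i, hi, rfl⟩ := Finset.mem_image.mp hx
    exact hG i (Finset.mem_range.mp hi)
  have hcard : ((Finset.range (G.card + 1)).image U).card = G.card + 1 := by
    rw [Finset.card_image_of_injOn, Finset.card_range]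
    intro i hi j hj hij
    by_contra hne2
    rcases lt_or_gt_of_ne hne2 with h | h
    · exact hinj i j h (Finset.mem_range.mp hj) hij
    · exact hinj j i h (Finset.mem_range.mp hi) hij.symm
  have := Finset.card_le_card hsub
  omega
lemma cycle_mono {V : Type*} [DecidableEq V] {G G' : Finset (Finset V)}
    (hsub : G' ⊆ G) (h : HasProperCycle G') : HasProperCycle G := by
  obtain ⟨l, hl, v, U, hinj, hG, hstep, hclose⟩ := h
  exact ⟨l, hl, v, U, hinj, fun i => hsub (hG i), hstep, hclose⟩

lemma order_aux {V : Type*} [DecidableEq V] :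
    ∀ (n : ℕ) (G : Finset (Finset V)), G.card = n → ¬ HasProperCycle G →
    ∃ f : Fin n → Finset V, Function.Injective f ∧ (∀ i, f i ∈ G) ∧
      ∀ i : Fin n, (((Finset.univ.filter (fun j => j < i)).biUnion f) ∩ f i).card ≤ 1 := by
  intro n
  induction n with
  | zero =>
    intro G _ _
    exact ⟨fun i => i.elim0, fun i => i.elim0, fun i => i.elim0, fun i => i.elim0⟩
  | succ n IH =>
    intro G hcard hforest
    have hGne : G.Nonempty := Finset.card_pos.mp (by omega)
    obtain ⟨U, hU, hle⟩ := exists_leaf G hGne hforest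
    set G' := G.erase U with hG'
    have hcard' : G'.card = n := by
      rw [hG', Finset.card_erase_of_mem hU, hcard]; omega
    have hforest' : ¬ HasProperCycle G' :=
      fun h => hforest (cycle_mono (Finset.erase_subset _ _) h)
    obtain ⟨f', hinj', hmem', hcond'⟩ := IH G' hcard' hforest'
    refine ⟨Fin.snoc f' U, ?_, ?_, ?_⟩
    · intro i j hij
      rcases Fin.eq_castSucc_or_eq_last i with ⟨i', rfl⟩ | rfl <;>
        rcases Fin.eq_castSucc_or_eq_last j with ⟨j', rfl⟩ | rfl
      · rw [Fin.snoc_castSucc, Fin.snoc_castSucc] at hij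
        exact congrArg Fin.castSucc (hinj' hij)
      · rw [Fin.snoc_castSucc, Fin.snoc_last] at hij
        exact absurd hij (Finset.ne_of_mem_erase (hmem' i'))
      · rw [Fin.snoc_castSucc, Fin.snoc_last] at hij
        exact absurd hij.symm (Finset.ne_of_mem_erase (hmem' j'))
      · rfl
    · intro i
      rcases Fin.eq_castSucc_or_eq_last i with ⟨i', rfl⟩ | rfl
      · rw [Fin.snoc_castSucc]
        exact Finset.mem_of_mem_erase (hmem' i')
      · rw [Fin.snoc_last]; exact hU
    · intro i
      rcases Fin.eq_castSucc_or_eq_last i with ⟨i', rfl⟩ | rfl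
      · rw [Fin.snoc_castSucc]
        have hbi : ((Finset.univ.filter (fun j => j < i'.castSucc)).biUnion (Fin.snoc f' U))
            = (Finset.univ.filter (fun j => j < i')).biUnion f' := by
          ext z
          simp only [Finset.mem_biUnion, Finset.mem_filter, Finset.mem_univ, true_and]
          constructor
          · rintro ⟨j, hj, hz⟩
            have hjn : j.val < n := lt_of_lt_of_le (Fin.lt_def.mp hj) (by
              simpa using i'.isLt.le)
            refine ⟨⟨j.val, hjn⟩, ?_, ?_⟩
            · exact Fin.lt_def.mpr (Fin.lt_def.mp hj)
            · have hje : j = Fin.castSucc ⟨j.val, hjn⟩ := by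
                apply Fin.ext; simp
              rw [hje, Fin.snoc_castSucc] at hz
              exact hz
          · rintro ⟨j, hj, hz⟩
            refine ⟨j.castSucc, ?_, ?_⟩
            · exact Fin.lt_def.mpr (Fin.lt_def.mp hj)
            · rw [Fin.snoc_castSucc]; exact hz
        rw [hbi]
        exact hcond' i'
      · rw [Fin.snoc_last]
        have hsubU : ((Finset.univ.filter (fun j => j < Fin.last n)).biUnion (Fin.snoc f' U))
            ⊆ G'.biUnion id := by
          intro z hz
          obtain ⟨j, hj, hz⟩ := Finset.mem_biUnion.mp hz
          have hjlt : j < Fin.last n := (Finset.mem_filter.mp hj).2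
          have hjn : j.val < n := by
            have := Fin.lt_def.mp hjlt
            simpa using this
          have hje : j = Fin.castSucc ⟨j.val, hjn⟩ := by
            apply Fin.ext; simp
          rw [hje, Fin.snoc_castSucc] at hz
          exact Finset.mem_biUnion.mpr ⟨f' ⟨j.val, hjn⟩, hmem' _, hz⟩
        calc (((Finset.univ.filter (fun j => j < Fin.last n)).biUnion (Fin.snoc f' U)) ∩ U).card
            ≤ ((G'.biUnion id) ∩ U).card :=
              Finset.card_le_card (Finset.inter_subset_inter hsubU le_rfl)
          _ ≤ 1 := hle

/-- If `G` is a hyperforest (no proper cycles), its hyperedges can be ordered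
`U_1, …, U_m` so that `|(U_1 ∪ ⋯ ∪ U_i) ∩ U_{i+1}| ≤ 1` for each `i`. -/
theorem stmt15 {V : Type*} [DecidableEq V] (G : Finset (Finset V))
    (hcard : ∀ U ∈ G, 2 ≤ U.card)
    (hforest : ¬ HasProperCycle G) :
    ∃ e : Fin G.card ≃ {U : Finset V // U ∈ G},
      ∀ i : Fin G.card,
        (((Finset.univ.filter (fun j => j < i)).biUnion
            (fun j => (e j).1)) ∩ (e i).1).card ≤ 1 := by
  obtain ⟨f, hinj, hmem, hcond⟩ := order_aux G.card G rfl hforest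
  have hbij : Function.Bijective (fun i => (⟨f i, hmem i⟩ : {U : Finset V // U ∈ G})) := by
    rw [Fintype.bijective_iff_injective_and_card]
    refine ⟨fun i j h => hinj (congrArg Subtype.val h), ?_⟩
    simp [Fintype.card_coe]
  refine ⟨Equiv.ofBijective _ hbij, ?_⟩
  intro i
  exact hcond i
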